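/- Let A, B be n×n real matrices. The Strang splitting approximation exp(hA/2) exp(hB) exp(hA/2) satisfies ‖exp(h(A+B)) − exp(hA/2) exp(hB) exp(hA/2)‖ ≤ C h³ for some constant C depending only on ‖A‖ and ‖B‖, for all h ∈ [0,1]. -/

import Mathlib

open Matrix NormedSpace
open scoped Nat

attribute [local instance] Matrix.linftyOpNormedAddCommGroup Matrix.linftyOpNormedRing
  Matrix.linftyOpNormedAlgebra

/-- Strang splitting is locally third-order accurate for matrix exponentials:
`‖exp(h(A+B)) − exp(hA/2)exp(hB)exp(hA/2)‖ ≤ C h³` for `h ∈ [0,1]`. -/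
theorem stmt_2 (n : ℕ) (A B : Matrix (Fin n) (Fin n) ℝ) :
    ∃ C : ℝ, ∀ h : ℝ, h ∈ Set.Icc (0:ℝ) 1 →
      ‖NormedSpace.exp (h • (A + B)) -
        (NormedSpace.exp ((h / 2) • A)) * (NormedSpace.exp (h • B)) * (NormedSpace.exp ((h / 2) • A))‖
        ≤ C * h ^ 3 := by
  classical
  set a := ‖A‖ with ha
  set b := ‖B‖ with hb
  have ha0 : 0 ≤ a := norm_nonneg _
  have hb0 : 0 ≤ b := norm_nonneg _
  -- the scalar comparison series
  set Ph : ℕ → ℝ := fun i => (a/2) ^ i / i ! with hPhdef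
  set Ps : ℕ → ℝ := fun j => b ^ j / j ! with hPsdef
  have hPh0 : ∀ i, 0 ≤ Ph i := fun i => by positivity
  have hPs0 : ∀ j, 0 ≤ Ps j := fun j => by positivity
  have hPhs : Summable Ph := Real.summable_pow_div_factorial _
  have hPss : Summable Ps := Real.summable_pow_div_factorial _
  have hPhn : Summable fun i => ‖Ph i‖ := by
    simpa only [Real.norm_of_nonneg (hPh0 _)] using hPhs
  have hPsn : Summable fun j => ‖Ps j‖ := by
    simpa only [Real.norm_of_nonneg (hPs0 _)] using hPss
  set q : ℕ → ℝ := fun m => ∑ ij ∈ Finset.HasAntidiagonal.antidiagonal m, Ph ij.1 * Ps ij.2 with hqdef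
  have hq0 : ∀ m, 0 ≤ q m := fun m =>
    Finset.sum_nonneg fun ij _ => mul_nonneg (hPh0 _) (hPs0 _)
  have hqn : Summable fun m => ‖q m‖ :=
    summable_norm_sum_mul_antidiagonal_of_summable_norm hPhn hPsn
  have hqs : Summable q := hqn.of_norm
  set v : ℕ → ℝ := fun k => ∑ ml ∈ Finset.HasAntidiagonal.antidiagonal k, q ml.1 * Ph ml.2 with hvdef
  have hv0 : ∀ k, 0 ≤ v k := fun k =>
    Finset.sum_nonneg fun ml _ => mul_nonneg (hq0 _) (hPh0 _)
  have hvn : Summable fun k => ‖v k‖ :=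
    summable_norm_sum_mul_antidiagonal_of_summable_norm hqn hPhn
  have hvs : Summable v := hvn.of_norm
  set w : ℕ → ℝ := fun k => (a + b) ^ k / k ! + v k with hwdef
  have hw0 : ∀ k, 0 ≤ w k := fun k => add_nonneg (by positivity) (hv0 k)
  have hws : Summable w := (Real.summable_pow_div_factorial _).add hvs
  -- tsum of w
  have htPh : ∑' i, Ph i = Real.exp (a/2) := by
    rw [Real.exp_eq_exp_ℝ, exp_eq_tsum_div]
  have htPs : ∑' j, Ps j = Real.exp b := by
    rw [Real.exp_eq_exp_ℝ, exp_eq_tsum_div]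
  have htq : ∑' m, q m = Real.exp (a/2) * Real.exp b := by
    rw [← htPh, ← htPs]
    exact (tsum_mul_tsum_eq_tsum_sum_antidiagonal_of_summable_norm hPhn hPsn).symm
  have htv : ∑' k, v k = Real.exp (a/2) * Real.exp b * Real.exp (a/2) := by
    rw [← htq, ← htPh]
    exact (tsum_mul_tsum_eq_tsum_sum_antidiagonal_of_summable_norm hqn hPhn).symm
  have htw : ∑' k, w k = Real.exp (a + b) + Real.exp (a/2) * Real.exp b * Real.exp (a/2) := by
    rw [hwdef, Summable.tsum_add (Real.summable_pow_div_factorial _) hvs, htv,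
      Real.exp_eq_exp_ℝ, exp_eq_tsum_div]
  refine ⟨Real.exp (a + b) + Real.exp (a/2) * Real.exp b * Real.exp (a/2), ?_⟩
  rintro h ⟨h0, h1⟩
  -- matrix series
  set X : Matrix (Fin n) (Fin n) ℝ := (h/2) • A with hXdef
  set Y : Matrix (Fin n) (Fin n) ℝ := h • B with hYdef
  set f : ℕ → Matrix (Fin n) (Fin n) ℝ := fun i => (i !⁻¹ : ℝ) • X ^ i with hfdef
  set g : ℕ → Matrix (Fin n) (Fin n) ℝ := fun j => (j !⁻¹ : ℝ) • Y ^ j with hgdef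
  have hfn : Summable fun i => ‖f i‖ := norm_expSeries_summable' X
  have hgn : Summable fun j => ‖g j‖ := norm_expSeries_summable' Y
  set p : ℕ → Matrix (Fin n) (Fin n) ℝ :=
    fun m => ∑ ij ∈ Finset.HasAntidiagonal.antidiagonal m, f ij.1 * g ij.2 with hpdef
  have hpn : Summable fun m => ‖p m‖ :=
    summable_norm_sum_mul_antidiagonal_of_summable_norm hfn hgn
  set T : ℕ → Matrix (Fin n) (Fin n) ℝ :=
    fun k => ∑ ml ∈ Finset.HasAntidiagonal.antidiagonal k, p ml.1 * f ml.2 with hTdef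
  have hTn : Summable fun k => ‖T k‖ :=
    summable_norm_sum_mul_antidiagonal_of_summable_norm hpn hfn
  set c : ℕ → Matrix (Fin n) (Fin n) ℝ := fun k => (k !⁻¹ : ℝ) • (h • (A + B)) ^ k with hcdef
  have hcn : Summable fun k => ‖c k‖ := norm_expSeries_summable' _
  have hR : NormedSpace.exp X * NormedSpace.exp Y * NormedSpace.exp X = ∑' k, T k := by
    rw [exp_eq_tsum ℝ]
    beta_reduce
    exact (congrArg (· * ∑' n, f n)
      (tsum_mul_tsum_eq_tsum_sum_antidiagonal_of_summable_norm hfn hgn)).trans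
      (tsum_mul_tsum_eq_tsum_sum_antidiagonal_of_summable_norm hpn hfn)
  have hL : NormedSpace.exp (h • (A + B)) = ∑' k, c k := by rw [exp_eq_tsum ℝ]
  -- norm of the identity matrix
  have hone : ‖(1 : Matrix (Fin n) (Fin n) ℝ)‖ ≤ 1 := by
    rcases n with _ | m
    · have : (1 : Matrix (Fin 0) (Fin 0) ℝ) = 0 := Subsingleton.elim _ _
      rw [this, norm_zero]; norm_num
    · haveI : NormOneClass (Matrix (Fin (m+1)) (Fin (m+1)) ℝ) :=
        Matrix.linfty_opNormOneClass
      exact le_of_eq norm_one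
  -- elementary norm bounds
  have hXn : ‖X‖ ≤ h * (a/2) := by
    rw [hXdef, norm_smul, Real.norm_eq_abs, abs_of_nonneg (by linarith)]
    rw [← ha]; ring_nf; exact le_refl _
  have hYn : ‖Y‖ ≤ h * b := by
    rw [hYdef, norm_smul, Real.norm_eq_abs, abs_of_nonneg h0, ← hb]
  have hpow : ∀ (Z : Matrix (Fin n) (Fin n) ℝ) (r : ℝ) (i : ℕ), 0 ≤ r → ‖Z‖ ≤ r →
      ‖(i !⁻¹ : ℝ) • Z ^ i‖ ≤ r ^ i / i ! := by
    intro Z r i hr hZr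
    rw [norm_smul, Real.norm_eq_abs, abs_of_nonneg (by positivity)]
    rcases Nat.eq_zero_or_pos i with rfl | hi
    · simp only [Nat.factorial_zero, pow_zero, Nat.cast_one, inv_one, one_mul]
      simp only [pow_zero, Nat.factorial_zero, Nat.cast_one, div_one]
      exact hone
    · calc (i !⁻¹ : ℝ) * ‖Z ^ i‖ ≤ (i !⁻¹ : ℝ) * r ^ i := by
            apply mul_le_mul_of_nonneg_left _ (by positivity)
            exact (norm_pow_le' Z hi).trans (pow_le_pow_left₀ (norm_nonneg _) hZr i)
          _ = r ^ i / i ! := by rw [div_eq_inv_mul, mul_comm]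
  have hfb : ∀ i, ‖f i‖ ≤ h ^ i * Ph i := by
    intro i
    have := hpow X (h * (a/2)) i (by positivity) hXn
    calc ‖f i‖ ≤ (h * (a/2)) ^ i / i ! := this
      _ = h ^ i * Ph i := by rw [hPhdef]; simp only [mul_pow]; ring
  have hgb : ∀ j, ‖g j‖ ≤ h ^ j * Ps j := by
    intro j
    have := hpow Y (h * b) j (by positivity) hYn
    calc ‖g j‖ ≤ (h * b) ^ j / j ! := this
      _ = h ^ j * Ps j := by rw [hPsdef]; simp only [mul_pow]; ring
  have hpb : ∀ m, ‖p m‖ ≤ h ^ m * q m := by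
    intro m
    calc ‖p m‖ ≤ ∑ ij ∈ Finset.HasAntidiagonal.antidiagonal m, ‖f ij.1 * g ij.2‖ := norm_sum_le _ _
      _ ≤ ∑ ij ∈ Finset.HasAntidiagonal.antidiagonal m, h ^ m * (Ph ij.1 * Ps ij.2) := by
          apply Finset.sum_le_sum
          intro ij hij
          have hm : ij.1 + ij.2 = m := Finset.HasAntidiagonal.mem_antidiagonal.mp hij
          calc ‖f ij.1 * g ij.2‖ ≤ ‖f ij.1‖ * ‖g ij.2‖ := norm_mul_le _ _
            _ ≤ (h ^ ij.1 * Ph ij.1) * (h ^ ij.2 * Ps ij.2) := by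
                apply mul_le_mul (hfb _) (hgb _) (norm_nonneg _)
                positivity
            _ = h ^ m * (Ph ij.1 * Ps ij.2) := by rw [← hm, pow_add]; ring
      _ = h ^ m * q m := by rw [hqdef, Finset.mul_sum]
  have hTb : ∀ k, ‖T k‖ ≤ h ^ k * v k := by
    intro k
    calc ‖T k‖ ≤ ∑ ml ∈ Finset.HasAntidiagonal.antidiagonal k, ‖p ml.1 * f ml.2‖ := norm_sum_le _ _
      _ ≤ ∑ ml ∈ Finset.HasAntidiagonal.antidiagonal k, h ^ k * (q ml.1 * Ph ml.2) := by
          apply Finset.sum_le_sum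
          intro ml hml
          have hm : ml.1 + ml.2 = k := Finset.HasAntidiagonal.mem_antidiagonal.mp hml
          calc ‖p ml.1 * f ml.2‖ ≤ ‖p ml.1‖ * ‖f ml.2‖ := norm_mul_le _ _
            _ ≤ (h ^ ml.1 * q ml.1) * (h ^ ml.2 * Ph ml.2) := by
                apply mul_le_mul (hpb _) (hfb _) (norm_nonneg _)
                positivity
            _ = h ^ k * (q ml.1 * Ph ml.2) := by rw [← hm, pow_add]; ring
      _ = h ^ k * v k := by rw [hvdef, Finset.mul_sum]
  have hcb : ∀ k, ‖c k‖ ≤ h ^ k * ((a + b) ^ k / k !) := by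
    intro k
    have hsum : ‖h • (A + B)‖ ≤ h * (a + b) := by
      rw [norm_smul, Real.norm_eq_abs, abs_of_nonneg h0]
      exact mul_le_mul_of_nonneg_left ((norm_add_le A B).trans (by rw [ha, hb])) h0
    calc ‖c k‖ ≤ (h * (a + b)) ^ k / k ! := hpow _ _ k (by positivity) hsum
      _ = h ^ k * ((a + b) ^ k / k !) := by simp only [mul_pow]; ring
  -- low-order terms agree
  have hsmul2 : ∀ Z : Matrix (Fin n) (Fin n) ℝ, ((2!:ℕ):ℝ)⁻¹ • Z ^ 2 = (2:ℝ)⁻¹ • (Z * Z) := by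
    intro Z
    rw [Nat.factorial_two, pow_two, Nat.cast_ofNat]
  have hsmul0 : ∀ Z : Matrix (Fin n) (Fin n) ℝ, ((0!:ℕ):ℝ)⁻¹ • Z ^ 0 = 1 := by
    intro Z
    rw [Nat.factorial_zero, pow_zero, Nat.cast_one, inv_one, one_smul]
  have hsmul1 : ∀ Z : Matrix (Fin n) (Fin n) ℝ, ((1!:ℕ):ℝ)⁻¹ • Z ^ 1 = Z := by
    intro Z
    rw [Nat.factorial_one, pow_one, Nat.cast_one, inv_one, one_smul]
  have hf0 : f 0 = 1 := hsmul0 X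
  have hf1 : f 1 = X := hsmul1 X
  have hf2 : f 2 = (2:ℝ)⁻¹ • (X * X) := hsmul2 X
  have hg0 : g 0 = 1 := hsmul0 Y
  have hg1 : g 1 = Y := hsmul1 Y
  have hg2 : g 2 = (2:ℝ)⁻¹ • (Y * Y) := hsmul2 Y
  have hc0 : c 0 = 1 := hsmul0 _
  have hc1 : c 1 = h • (A + B) := hsmul1 _
  have hc2 : c 2 = (2:ℝ)⁻¹ • ((h • (A + B)) * (h • (A + B))) := hsmul2 _
  have antisum : ∀ (m : ℕ) (F : ℕ × ℕ → Matrix (Fin n) (Fin n) ℝ),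
      ∑ ij ∈ Finset.HasAntidiagonal.antidiagonal m, F ij = ∑ i ∈ Finset.range (m+1), F (i, m - i) :=
    fun m F => Finset.Nat.sum_antidiagonal_eq_sum_range_succ_mk F m
  have hp0 : p 0 = 1 := by
    simp only [hpdef]
    rw [antisum 0 (fun ij => f ij.1 * g ij.2)]
    rw [Finset.sum_range_one]
    simp [hf0, hg0]
  have hp1 : p 1 = Y + X := by
    simp only [hpdef]
    rw [antisum 1 (fun ij => f ij.1 * g ij.2), Finset.sum_range_succ,
      Finset.sum_range_one]
    simp [hf0, hf1, hg0, hg1]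
  have hp2 : p 2 = (2:ℝ)⁻¹ • (Y * Y) + X * Y + (2:ℝ)⁻¹ • (X * X) := by
    simp only [hpdef]
    rw [antisum 2 (fun ij => f ij.1 * g ij.2), Finset.sum_range_succ,
      Finset.sum_range_succ, Finset.sum_range_one]
    norm_num [hf0, hf1, hf2, hg0, hg1, hg2, smul_mul_assoc]
  have hT0 : T 0 = 1 := by
    simp only [hTdef]
    rw [antisum 0 (fun ml => p ml.1 * f ml.2), Finset.sum_range_one]
    simp [hp0, hf0]
  have hT1 : T 1 = X + (Y + X) := by
    simp only [hTdef]
    rw [antisum 1 (fun ml => p ml.1 * f ml.2), Finset.sum_range_succ,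
      Finset.sum_range_one]
    simp [hp0, hp1, hf0, hf1]
  have hT2 : T 2 = (2:ℝ)⁻¹ • (X * X) + (Y + X) * X
      + ((2:ℝ)⁻¹ • (Y * Y) + X * Y + (2:ℝ)⁻¹ • (X * X)) := by
    simp only [hTdef]
    rw [antisum 2 (fun ml => p ml.1 * f ml.2), Finset.sum_range_succ,
      Finset.sum_range_succ, Finset.sum_range_one]
    norm_num [hp0, hp1, hp2, hf0, hf1, hf2]
  have hlow : ∀ k, k ≤ 2 → c k = T k := by
    intro k hk
    interval_cases k
    · rw [hc0, hT0]
    · rw [hc1, hT1, hXdef, hYdef]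
      module
    · rw [hc2, hT2, hXdef, hYdef]
      simp only [mul_add, add_mul, smul_mul_assoc, mul_smul_comm, smul_smul, smul_add]
      module
  -- the key term bound
  have key : ∀ k, ‖c k - T k‖ ≤ h ^ 3 * w k := by
    intro k
    rcases lt_or_ge k 3 with hk | hk
    · rw [hlow k (by omega), sub_self, norm_zero]
      exact mul_nonneg (pow_nonneg h0 3) (hw0 k)
    · have hkk : h ^ k ≤ h ^ 3 := pow_le_pow_of_le_one h0 h1 hk
      calc ‖c k - T k‖ ≤ ‖c k‖ + ‖T k‖ := norm_sub_le _ _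
        _ ≤ h ^ k * ((a + b) ^ k / k !) + h ^ k * v k :=
            add_le_add (hcb k) (hTb k)
        _ ≤ h ^ 3 * ((a + b) ^ k / k !) + h ^ 3 * v k := by
            apply add_le_add
            · exact mul_le_mul_of_nonneg_right hkk
                (div_nonneg (pow_nonneg (add_nonneg ha0 hb0) k) (Nat.cast_nonneg _))
            · exact mul_le_mul_of_nonneg_right hkk (hv0 k)
        _ = h ^ 3 * w k := by rw [hwdef]; ring
  -- put everything together
  have hsub : Summable fun k => ‖c k - T k‖ :=
    Summable.of_nonneg_of_le (fun k => norm_nonneg _) key (hws.mul_left _)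
  calc ‖NormedSpace.exp (h • (A + B)) - NormedSpace.exp X * NormedSpace.exp Y * NormedSpace.exp X‖
      = ‖∑' k, (c k - T k)‖ := by
        rw [hL, hR]; congr 1; exact (Summable.tsum_sub hcn.of_norm hTn.of_norm).symm
    _ ≤ ∑' k, ‖c k - T k‖ := norm_tsum_le_tsum_norm hsub
    _ ≤ ∑' k, h ^ 3 * w k := Summable.tsum_le_tsum key hsub (hws.mul_left _)
    _ = (Real.exp (a + b) + Real.exp (a/2) * Real.exp b * Real.exp (a/2)) * h ^ 3 := by
        rw [tsum_mul_left, htw]; ring
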